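/- Let Q be a real Hilbert space, K_Q ⊆ Q nonempty closed convex with projection P, B : V → Q bounded linear with ‖B‖ ≤ M_b, and suppose u₁, u₂ ∈ V, p₁, p₂ ∈ Q satisfy b(u₁−u₂, p₁−p₂) ≤ −m‖u₁−u₂‖_V² for some m > 0, where b(v,q) = (Bv,q)_Q. Then for any ρ > 0, ‖P(p₁+ρBu₁) − P(p₂+ρBu₂)‖_Q² ≤ ‖p₁−p₂‖_Q² − (2ρm − ρ²M_b²)‖u₁−u₂‖_V². -/

import Mathlib

lemma proj_nonexpansive {Q : Type*} [NormedAddCommGroup Q] [InnerProductSpace ℝ Q]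
    (K : Set Q) (P : Q → Q)
    (hP : ∀ z : Q, P z ∈ K ∧ ∀ q ∈ K, inner ℝ (z - P z) (q - P z) ≤ (0 : ℝ))
    (z₁ z₂ : Q) : ‖P z₁ - P z₂‖ ≤ ‖z₁ - z₂‖ := by
  have h1 := (hP z₁).2 (P z₂) (hP z₂).1
  have h2 := (hP z₂).2 (P z₁) (hP z₁).1
  have key : ‖P z₁ - P z₂‖ ^ 2 ≤ (inner ℝ (z₁ - z₂) (P z₁ - P z₂) : ℝ) := by
    have : (inner ℝ (z₁ - z₂) (P z₁ - P z₂) : ℝ) - ‖P z₁ - P z₂‖ ^ 2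
        = -(inner ℝ (z₁ - P z₁) (P z₂ - P z₁) : ℝ) - inner ℝ (z₂ - P z₂) (P z₁ - P z₂) := by
      rw [← real_inner_self_eq_norm_sq]
      simp only [inner_sub_left, inner_sub_right]
      ring
    nlinarith [this]
  have hcs : (inner ℝ (z₁ - z₂) (P z₁ - P z₂) : ℝ) ≤ ‖z₁ - z₂‖ * ‖P z₁ - P z₂‖ :=
    real_inner_le_norm _ _
  nlinarith [norm_nonneg (P z₁ - P z₂), norm_nonneg (z₁ - z₂), key, hcs,
    sq_nonneg (‖P z₁ - P z₂‖ - ‖z₁ - z₂‖)]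

/-- If `b(u₁−u₂, p₁−p₂) ≤ −m‖u₁−u₂‖²` with `b(v,q) = ⟪Bv,q⟫`, `‖B‖ ≤ M_b` and `P` is the
(non-expansive) metric projection onto the nonempty closed convex set `K`, then for any
`ρ > 0`, `‖P(p₁+ρBu₁) − P(p₂+ρBu₂)‖² ≤ ‖p₁−p₂‖² − (2ρm − ρ²M_b²)‖u₁−u₂‖²`. -/
theorem projection_iteration_contraction
    {V Q : Type*} [NormedAddCommGroup V] [InnerProductSpace ℝ V] [CompleteSpace V]
    [NormedAddCommGroup Q] [InnerProductSpace ℝ Q] [CompleteSpace Q]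
    (K : Set Q) (hK : K.Nonempty) (hKc : IsClosed K) (hKconv : Convex ℝ K)
    (P : Q → Q)
    (hP : ∀ z : Q, P z ∈ K ∧ ∀ q ∈ K, inner ℝ (z - P z) (q - P z) ≤ (0 : ℝ))
    (B : V →L[ℝ] Q) (M_b : ℝ) (hB : ‖B‖ ≤ M_b)
    (m : ℝ) (hm : 0 < m)
    (u₁ u₂ : V) (p₁ p₂ : Q)
    (hb : (inner ℝ (B (u₁ - u₂)) (p₁ - p₂) : ℝ) ≤ -m * ‖u₁ - u₂‖ ^ 2)
    (ρ : ℝ) (hρ : 0 < ρ) :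
    ‖P (p₁ + ρ • B u₁) - P (p₂ + ρ • B u₂)‖ ^ 2
      ≤ ‖p₁ - p₂‖ ^ 2 - (2 * ρ * m - ρ ^ 2 * M_b ^ 2) * ‖u₁ - u₂‖ ^ 2 := by
  have hne := proj_nonexpansive K P hP (p₁ + ρ • B u₁) (p₂ + ρ • B u₂)
  have hsq : ‖P (p₁ + ρ • B u₁) - P (p₂ + ρ • B u₂)‖ ^ 2
      ≤ ‖(p₁ + ρ • B u₁) - (p₂ + ρ • B u₂)‖ ^ 2 := by
    exact pow_le_pow_left₀ (norm_nonneg _) hne 2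
  have hrw : (p₁ + ρ • B u₁) - (p₂ + ρ • B u₂) = (p₁ - p₂) + ρ • B (u₁ - u₂) := by
    rw [map_sub]; module
  rw [hrw] at hsq
  have hexp : ‖(p₁ - p₂) + ρ • B (u₁ - u₂)‖ ^ 2
      = ‖p₁ - p₂‖ ^ 2 + 2 * ρ * (inner ℝ (B (u₁ - u₂)) (p₁ - p₂) : ℝ)
        + ρ ^ 2 * ‖B (u₁ - u₂)‖ ^ 2 := by
    rw [← real_inner_self_eq_norm_sq, ← real_inner_self_eq_norm_sq,
      ← real_inner_self_eq_norm_sq]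
    simp only [inner_add_left, inner_add_right, inner_smul_left, inner_smul_right,
      RCLike.ofReal_real_eq_id, id, conj_trivial]
    rw [real_inner_comm (B (u₁ - u₂)) (p₁ - p₂)]
    ring
  have hBnorm : ‖B (u₁ - u₂)‖ ≤ M_b * ‖u₁ - u₂‖ :=
    le_trans (B.le_opNorm _) (mul_le_mul_of_nonneg_right hB (norm_nonneg _))
  have hBn2 : ‖B (u₁ - u₂)‖ ^ 2 ≤ M_b ^ 2 * ‖u₁ - u₂‖ ^ 2 := by
    nlinarith [norm_nonneg (B (u₁ - u₂))]
  nlinarith [hsq, hexp, hb, hBn2, sq_nonneg ρ, hρ.le]
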